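/- If p : \tilde{X} → X is a covering projection of path-connected spaces, then for all n ≥ 2 the induced map p_* : π_n^{qtop}(\tilde{X}) → π_n^{qtop}(X) is an isomorphism of quasitopological groups. -/

import Mathlib

open Topology.Homotopy unitInterval

noncomputable section

/-- The quotient topology on `πₙ(X,x)` making it `πₙ^{qtop}(X,x)`. -/
instance piQTop (N X : Type*) [TopologicalSpace X] (x : X) :
    TopologicalSpace (HomotopyGroup N X x) :=
  inferInstanceAs (TopologicalSpace (Quotient _))

open Set Topology Filter

universe u

section CoveringLifting

variable {E X : Type*} [TopologicalSpace E] [TopologicalSpace X] {p : E → X}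

lemma glueStep {A : Type*} [TopologicalSpace A]
    {F : Type*} [TopologicalSpace F] (T : Bundle.Trivialization F p)
    {H : C(A × I, X)} {N : Set A} {c d : I} (hcd : c ≤ d)
    (hU : ∀ a ∈ N, ∀ t : I, t ∈ Icc c d → H (a, t) ∈ T.baseSet)
    {G : A × I → E} (hG : ContinuousOn G (N ×ˢ Icc 0 c))
    (hGp : ∀ z ∈ N ×ˢ Icc 0 c, p (G z) = H z) :
    ∃ G' : A × I → E, ContinuousOn G' (N ×ˢ Icc 0 d) ∧
      (∀ z ∈ N ×ˢ Icc 0 d, p (G' z) = H z) ∧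
      ∀ z ∈ N ×ˢ Icc 0 c, G' z = G z := by
  classical
  have hc0 : ∀ a ∈ N, (a, c) ∈ N ×ˢ Icc (0:I) c := fun a ha => ⟨ha, ⟨c.2.1, le_refl c⟩⟩
  have hsrc : ∀ a ∈ N, G (a, c) ∈ T.source := fun a ha => by
    rw [T.mem_source, hGp _ (hc0 a ha)]
    exact hU a ha c ⟨le_refl c, hcd⟩
  set B : A × I → E := fun z => T.toPartialHomeomorph.symm (H z, (T (G (z.1, c))).2) with hB
  have hBp : ∀ z ∈ N ×ˢ Icc c d, p (B z) = H z := by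
    rintro ⟨a, t⟩ ⟨ha, ht⟩
    exact T.proj_symm_apply (T.mem_target.2 (hU a ha t ht))
  have hBG : ∀ a ∈ N, B (a, c) = G (a, c) := by
    intro a ha
    have h1 : p (G (a, c)) = H (a, c) := hGp _ (hc0 a ha)
    calc B (a, c) = T.toPartialHomeomorph.symm (p (G (a, c)), (T (G (a, c))).2) := by
          rw [hB]; dsimp only; rw [h1]
      _ = G (a, c) := T.symm_apply_mk_proj (hsrc a ha)
  have hclosed : IsClosed {z : A × I | z.2 ≤ c} := by
    have he : {z : A × I | z.2 ≤ c} = (fun z : A × I => (z.2 : ℝ)) ⁻¹' Iic (c : ℝ) := by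
      ext z; simp [Subtype.coe_le_coe]
    rw [he]
    exact isClosed_Iic.preimage (continuous_subtype_val.comp continuous_snd)
  have hclosed2 : IsClosed {z : A × I | c ≤ z.2} := by
    have he : {z : A × I | c ≤ z.2} = (fun z : A × I => (z.2 : ℝ)) ⁻¹' Ici (c : ℝ) := by
      ext z; simp [Subtype.coe_le_coe]
    rw [he]
    exact isClosed_Ici.preimage (continuous_subtype_val.comp continuous_snd)
  have hclosure2 : closure {z : A × I | ¬ z.2 ≤ c} ⊆ {z : A × I | c ≤ z.2} := by
    apply closure_minimal ?_ hclosed2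
    intro w hw
    exact (lt_of_not_ge hw).le
  have hfr : frontier {z : A × I | z.2 ≤ c} ⊆ {z : A × I | z.2 = c} := by
    intro z hz
    have h1 : z.2 ≤ c := by
      have := frontier_subset_closure hz
      rwa [hclosed.closure_eq] at this
    have h2 : c ≤ z.2 := by
      have hz' : z ∈ frontier {w : A × I | w.2 ≤ c}ᶜ := by rwa [frontier_compl]
      have := frontier_subset_closure hz'
      have hce : ({w : A × I | w.2 ≤ c}ᶜ : Set (A × I)) = {w : A × I | ¬ w.2 ≤ c} := rfl
      rw [hce] at this
      exact hclosure2 this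
    exact le_antisymm h1 h2
  have hBcont : ContinuousOn B (N ×ˢ Icc c d) := by
    have h1 : ContinuousOn (fun z : A × I => G (z.1, c)) (N ×ˢ Icc c d) := by
      refine hG.comp (Continuous.continuousOn (by fun_prop)) ?_
      rintro ⟨a, t⟩ ⟨ha, _⟩; exact hc0 a ha
    have h2 : ContinuousOn (fun z : A × I => T (G (z.1, c))) (N ×ˢ Icc c d) := by
      have := T.toOpenPartialHomeomorph.continuousOn
      rw [T.coe_coe] at this
      refine this.comp h1 ?_
      rintro ⟨a, t⟩ ⟨ha, _⟩; exact hsrc a ha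
    have hφ : ContinuousOn (fun z : A × I => ((H z : X), (T (G (z.1, c))).2)) (N ×ˢ Icc c d) :=
      (H.continuous.continuousOn).prodMk (continuous_snd.comp_continuousOn h2)
    refine T.toPartialHomeomorph.continuousOn_symm.comp hφ ?_
    rintro ⟨a, t⟩ ⟨ha, ht⟩
    exact T.mem_target.2 (hU a ha t ht)
  refine ⟨fun z => if z.2 ≤ c then G z else B z, ?_, ?_, ?_⟩
  · refine ContinuousOn.if ?_ ?_ ?_
    · rintro z ⟨hz, hfz⟩
      have hzc : z.2 = c := hfr hfz
      have hz' : z = (z.1, c) := by rw [← hzc]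
      rw [hz']
      exact (hBG z.1 hz.1).symm
    · refine hG.mono ?_
      rintro z ⟨⟨hz1, hz2⟩, hz3⟩
      rw [hclosed.closure_eq] at hz3
      exact ⟨hz1, ⟨hz2.1, hz3⟩⟩
    · refine hBcont.mono ?_
      rintro z ⟨⟨hz1, hz2⟩, hz3⟩
      exact ⟨hz1, ⟨hclosure2 hz3, hz2.2⟩⟩
  · rintro ⟨a, t⟩ ⟨ha, ht⟩
    show p (if (t : I) ≤ c then G (a, t) else B (a, t)) = H (a, t)
    by_cases h : t ≤ c
    · rw [if_pos h]; exact hGp _ ⟨ha, ⟨ht.1, h⟩⟩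
    · rw [if_neg h]; exact hBp _ ⟨ha, ⟨le_of_not_ge h, ht.2⟩⟩
  · rintro ⟨a, t⟩ ⟨ha, ht⟩
    show (if (t : I) ≤ c then G (a, t) else B (a, t)) = G (a, t)
    exact if_pos ht.2

lemma stripLift (hp : IsCoveringMap p) (hs : Function.Surjective p) {A : Type*} [TopologicalSpace A]
    (H : C(A × I, X)) (a : A) :
    ∃ N ∈ 𝓝 a, ∀ g₀ : A → E, ContinuousOn g₀ N → (∀ a' ∈ N, p (g₀ a') = H (a', 0)) →
      ∃ G : A × I → E, ContinuousOn G (N ×ˢ (univ : Set I)) ∧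
        (∀ z ∈ N ×ˢ (univ : Set I), p (G z) = H z) ∧ ∀ a' ∈ N, G (a', 0) = g₀ a' := by
  classical
  haveI : ∀ x, Nonempty (p ⁻¹' {x}) := fun x => ⟨⟨(hs x).choose, (hs x).choose_spec⟩⟩
  -- open cover of I
  set c : X → Set I := fun x => {u : I | H (a, u) ∈ (hp x).toTrivialization.baseSet} with hc
  have hc₁ : ∀ x, IsOpen (c x) := fun x =>
    ((hp x).toTrivialization.open_baseSet).preimage (H.continuous.comp (Continuous.prodMk_right a))
  have hc₂ : (univ : Set I) ⊆ ⋃ x, c x := fun u _ =>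
    mem_iUnion.2 ⟨H (a, u), (hp _).mem_toTrivialization_baseSet⟩
  obtain ⟨t, ht0', htmono, ⟨m, htm'⟩, hsub⟩ :=
    exists_monotone_Icc_subset_open_cover_Icc zero_le_one hc₁ hc₂
  have ht0 : t 0 = 0 := Subtype.ext ht0'
  have htm : ∀ n ≥ m, t n = 1 := fun n hn => Subtype.ext (htm' n hn)
  -- chosen trivializations
  have hkey : ∀ n, ∀ u ∈ Icc (t n) (t (n+1)),
      H (a, u) ∈ (hp ((hsub n).choose)).toTrivialization.baseSet := fun n u hu =>
    (hsub n).choose_spec hu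
  -- tube lemma
  have tube : ∀ n : ℕ, ∃ V : Set A, IsOpen V ∧ a ∈ V ∧
      ∀ a' ∈ V, ∀ u ∈ Icc (t n) (t (n+1)), H (a', u) ∈ (hp ((hsub n).choose)).toTrivialization.baseSet := by
    intro n
    obtain ⟨u, v, hu, hv, hau, hIv, huv⟩ :=
      generalized_tube_lemma isCompact_singleton ((isClosed_Icc.isCompact :
          IsCompact (Icc (t n) (t (n+1)))))
        (H.continuous.isOpen_preimage _ (hp ((hsub n).choose)).toTrivialization.open_baseSet)
        (by rintro ⟨a', w⟩ ⟨rfl : a' = a, hw⟩; exact hkey n w hw)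
    exact ⟨u, hu, hau rfl, fun a' ha' w hw => huv ⟨ha', hIv hw⟩⟩
  set V : ℕ → Set A := fun n => (tube n).choose with hV
  set N : Set A := ⋂ n : Fin m, V n with hN
  have hNmem : N ∈ 𝓝 a :=
    Filter.iInter_mem.2 fun n => ((tube n).choose_spec.1).mem_nhds (tube n).choose_spec.2.1
  have hNsub : ∀ n : ℕ, n < m → ∀ a' ∈ N, ∀ u ∈ Icc (t n) (t (n+1)),
      H (a', u) ∈ (hp ((hsub n).choose)).toTrivialization.baseSet := fun n hn a' ha' u hu =>
    (tube n).choose_spec.2.2 a' (by exact mem_iInter.1 ha' ⟨n, hn⟩) u hu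
  refine ⟨N, hNmem, fun g₀ hg₀c hg₀p => ?_⟩
  have main : ∀ k : ℕ, k ≤ m → ∃ G : A × I → E, ContinuousOn G (N ×ˢ Icc 0 (t k)) ∧
      (∀ z ∈ N ×ˢ Icc 0 (t k), p (G z) = H z) ∧ ∀ a' ∈ N, G (a', 0) = g₀ a' := by
    intro k
    induction k with
    | zero =>
      intro _
      refine ⟨fun z => g₀ z.1, hg₀c.comp continuous_fst.continuousOn (fun z hz => hz.1), ?_, ?_⟩
      · rintro ⟨a', u⟩ ⟨ha', hu⟩
        have hu0 : u = 0 := le_antisymm (by rw [← ht0]; exact hu.2) nonneg'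
        rw [hu0]
        exact hg₀p a' ha'
      · exact fun a' _ => rfl
    | succ k ih =>
      intro hk
      obtain ⟨G, hGc, hGp, hGi⟩ := ih (Nat.le_of_succ_le hk)
      obtain ⟨G', h1, h2, h3⟩ := glueStep ((hp ((hsub k).choose)).toTrivialization) (htmono (Nat.le_succ k))
        (hNsub k hk) hGc hGp
      exact ⟨G', h1, h2, fun a' ha' => by
        rw [h3 (a', 0) ⟨ha', ⟨le_refl 0, by rw [← ht0]; exact htmono (Nat.zero_le k)⟩⟩]
        exact hGi a' ha'⟩
  obtain ⟨G, hGc, hGp, hGi⟩ := main m (le_refl m)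
  have hicc : Icc (0:I) (t m) = univ := by
    rw [htm m (le_refl m)]
    exact eq_univ_of_forall fun u => ⟨nonneg', le_one'⟩
  rw [hicc] at hGc hGp
  exact ⟨G, hGc, hGp, hGi⟩

lemma liftUnique (hp : IsCoveringMap p) {Z : Type*} [TopologicalSpace Z] [PreconnectedSpace Z]
    {g₁ g₂ : Z → E} (h₁ : Continuous g₁) (h₂ : Continuous g₂) (he : ∀ z, p (g₁ z) = p (g₂ z))
    {z₀ : Z} (hz : g₁ z₀ = g₂ z₀) : ∀ z, g₁ z = g₂ z := fun z =>
  congrFun (hp.eq_of_comp_eq h₁ h₂ (funext he) z₀ hz) z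

theorem hLift (hp : IsCoveringMap p) (hs : Function.Surjective p) {A : Type*} [TopologicalSpace A]
    (H : C(A × I, X)) (g₀ : C(A, E)) (hg₀ : ∀ a, p (g₀ a) = H (a, 0)) :
    ∃ G : C(A × I, E), (∀ z, p (G z) = H z) ∧ ∀ a, G (a, 0) = g₀ a := by
  classical
  have loc : ∀ a : A, ∃ N ∈ 𝓝 a, ∃ G : A × I → E, ContinuousOn G (N ×ˢ (univ : Set I)) ∧
      (∀ z ∈ N ×ˢ (univ : Set I), p (G z) = H z) ∧ ∀ a' ∈ N, G (a', 0) = g₀ a' := by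
    intro a
    obtain ⟨N, hN, h⟩ := stripLift hp hs H a
    obtain ⟨G, hc, hl, hi⟩ := h g₀ g₀.continuous.continuousOn (fun a' _ => hg₀ a')
    exact ⟨N, hN, G, hc, hl, hi⟩
  choose N hNmem G hGc hGp hGi using loc
  have hmem : ∀ a, a ∈ N a := fun a => mem_of_mem_nhds (hNmem a)
  have sliceCont : ∀ (b a : A), a ∈ N b → Continuous fun u : I => G b (a, u) := by
    intro b a ha
    exact (hGc b).comp_continuous (Continuous.prodMk_right a) (fun u => ⟨ha, trivial⟩)
  have agree : ∀ (b a : A), a ∈ N b → ∀ u : I, G a (a, u) = G b (a, u) := by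
    intro b a ha
    refine liftUnique hp (sliceCont a a (hmem a)) (sliceCont b a ha) (fun u => ?_) (z₀ := 0) ?_
    · rw [hGp a (a, u) ⟨hmem a, trivial⟩, hGp b (a, u) ⟨ha, trivial⟩]
    · rw [hGi a a (hmem a), hGi b a ha]
  have hcont : Continuous fun z : A × I => G z.1 z := by
    rw [continuous_iff_continuousAt]
    rintro ⟨b, u⟩
    have h1 : ContinuousAt (G b) (b, u) :=
      (hGc b).continuousAt (prod_mem_nhds (hNmem b) univ_mem)
    refine h1.congr ?_
    refine Filter.eventuallyEq_of_mem (prod_mem_nhds (hNmem b) univ_mem) ?_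
    rintro ⟨a, v⟩ ⟨ha, -⟩
    exact (agree b a ha v).symm
  refine ⟨⟨fun z => G z.1 z, hcont⟩, ?_, ?_⟩
  · intro z; exact hGp z.1 z ⟨hmem z.1, trivial⟩
  · intro a; exact hGi a a (hmem a)

/-- Splitting the (n+1)-cube as I × n-cube. -/
def cubeSucc (n : ℕ) : (Fin (n+1) → I) ≃ₜ I × (Fin n → I) where
  toFun y := (y 0, fun i => y i.succ)
  invFun z := Fin.cons z.1 z.2
  left_inv y := funext fun i => Fin.cases rfl (fun j => rfl) i
  right_inv z := rfl
  continuous_toFun := by fun_prop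
  continuous_invFun := by
    apply continuous_pi; intro j
    refine Fin.cases ?_ ?_ j
    · simp only [Fin.cons_zero]; exact continuous_fst
    · intro i; simp only [Fin.cons_succ]; exact (continuous_apply i).comp continuous_snd

theorem cubeLift (hp : IsCoveringMap p) (hs : Function.Surjective p) : ∀ (n : ℕ) {A : Type u} [TopologicalSpace A]
    (f : C(A × (Fin n → I), X)) (g₀ : C(A, E)),
    (∀ a, p (g₀ a) = f (a, fun _ => 0)) →
    ∃ g : C(A × (Fin n → I), E), (∀ z, p (g z) = f z) ∧ ∀ a, g (a, fun _ => 0) = g₀ a := by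
  intro n
  induction n with
  | zero =>
    intro A _ f g₀ h
    refine ⟨⟨fun z => g₀ z.1, by fun_prop⟩, ?_, fun a => rfl⟩
    intro z
    have hz : z = (z.1, fun _ => 0) := by
      ext i
      · rfl
      · exact absurd i.2 (by omega)
    show p (g₀ z.1) = f z
    rw [h z.1]
    exact (congrArg f hz).symm
  | succ n ih =>
    intro A _ f g₀ h
    set e := cubeSucc n with he
    set F : C((A × (Fin n → I)) × I, X) :=
      ⟨fun z => f (z.1.1, e.symm (z.2, z.1.2)), by
        have : Continuous fun z : (A × (Fin n → I)) × I => (z.1.1, e.symm (z.2, z.1.2)) := by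
          refine (continuous_fst.comp continuous_fst).prodMk ?_
          exact e.symm.continuous.comp (continuous_snd.prodMk (continuous_snd.comp continuous_fst))
        exact f.continuous.comp this⟩ with hF
    have hzero : (e.symm (0, fun _ => 0) : Fin (n+1) → I) = fun _ => 0 := by
      funext i
      show (Fin.cons (0:I) (fun _ => (0:I)) : Fin (n+1) → I) i = 0
      refine Fin.cases ?_ (fun j => ?_) i
      · exact Fin.cons_zero _ _
      · exact Fin.cons_succ _ _ _
    set f₀ : C(A × (Fin n → I), X) := ⟨fun w => F (w, 0), by fun_prop⟩ with hf₀
    have h₀ : ∀ a, p (g₀ a) = f₀ (a, fun _ => 0) := by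
      intro a
      rw [h a]
      show f _ = f (a, e.symm (0, fun _ => 0))
      rw [hzero]
    obtain ⟨g₁, hg₁p, hg₁i⟩ := ih f₀ g₀ h₀
    obtain ⟨G, hGp, hGi⟩ := hLift hp hs F g₁ (fun w => hg₁p w)
    refine ⟨⟨fun z => G ((z.1, (e z.2).2), (e z.2).1), by
      have : Continuous fun z : A × (Fin (n+1) → I) => ((z.1, (e z.2).2), (e z.2).1) := by
        refine Continuous.prodMk ?_ ?_
        · exact continuous_fst.prodMk (continuous_snd.comp (e.continuous.comp continuous_snd))
        · exact continuous_fst.comp (e.continuous.comp continuous_snd)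
      exact G.continuous.comp this⟩, ?_, ?_⟩
    · intro z
      show p (G ((z.1, (e z.2).2), (e z.2).1)) = f z
      rw [hGp]
      show f (z.1, e.symm ((e z.2).1, (e z.2).2)) = f z
      congr 1
      exact congrArg (Prod.mk z.1) (e.symm_apply_apply z.2)
    · intro a
      show G ((a, (e fun _ => 0).2), (e fun _ => 0).1) = g₀ a
      have h1 : (e fun (_ : Fin (n+1)) => (0:I)) = (0, fun _ => 0) := rfl
      rw [h1]
      exact (hGi (a, fun _ => 0)).trans (hg₁i a)

lemma cubeBoundary_pathConnected (n : ℕ) : IsPathConnected (Cube.boundary (Fin (n+2))) := by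
  classical
  have mem0 : (fun _ => 0 : Fin (n+2) → I) ∈ Cube.boundary (Fin (n+2)) := ⟨0, Or.inl rfl⟩
  have lemA : ∀ y : Fin (n+2) → I, ∀ i, y i = 0 →
      JoinedIn (Cube.boundary (Fin (n+2))) y (fun _ => 0) := by
    intro y i hi
    refine ⟨⟨⟨fun t => fun k =>
      (⟨(σ t : ℝ) * (y k : ℝ), unitInterval.mul_mem (σ t).2 (y k).2⟩ : I), ?_⟩, ?_, ?_⟩, ?_⟩
    · refine continuous_pi fun k => Continuous.subtype_mk ?_ _
      exact (continuous_subtype_val.comp continuous_symm).mul continuous_const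
    · funext k; apply Subtype.ext
      show (σ 0 : ℝ) * (y k : ℝ) = (y k : ℝ)
      rw [symm_zero]; simp
    · funext k; apply Subtype.ext
      show (σ 1 : ℝ) * (y k : ℝ) = ((0:I) : ℝ)
      rw [symm_one]; simp
    · intro t
      refine ⟨i, Or.inl ?_⟩
      apply Subtype.ext
      show (σ t : ℝ) * (y i : ℝ) = ((0:I) : ℝ)
      rw [hi]; simp
  have lemB : ∀ y : Fin (n+2) → I, ∀ i, y i = 1 →
      JoinedIn (Cube.boundary (Fin (n+2))) y (fun _ => 0) := by
    intro y i hi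
    obtain ⟨j, hj⟩ := exists_ne i
    set y' : Fin (n+2) → I := fun k => if k = j then 0 else y k with hy'
    have step1 : JoinedIn (Cube.boundary (Fin (n+2))) y y' := by
      refine ⟨⟨⟨fun t => fun k => if k = j then
        (⟨(σ t : ℝ) * (y j : ℝ), unitInterval.mul_mem (σ t).2 (y j).2⟩ : I) else y k, ?_⟩,
        ?_, ?_⟩, ?_⟩
      · refine continuous_pi fun k => ?_
        by_cases hk : k = j
        · simp only [hk, if_pos]
          exact Continuous.subtype_mk
            ((continuous_subtype_val.comp continuous_symm).mul continuous_const) _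
        · simp only [if_neg hk]
          exact continuous_const
      · funext k
        by_cases hk : k = j
        · subst hk
          simp only [if_pos rfl]
          apply Subtype.ext
          show (σ 0 : ℝ) * (y k : ℝ) = (y k : ℝ)
          rw [symm_zero]; simp
        · simp only [if_neg hk]
      · funext k
        by_cases hk : k = j
        · subst hk
          simp only [if_pos rfl, hy']
          apply Subtype.ext
          show (σ 1 : ℝ) * (y k : ℝ) = ((0:I) : ℝ)
          rw [symm_one]; simp
        · simp only [if_neg hk, hy']
      · intro t
        refine ⟨i, Or.inr ?_⟩
        show (if i = j then _ else y i) = 1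
        rw [if_neg (Ne.symm hj), hi]
    have step2 : JoinedIn (Cube.boundary (Fin (n+2))) y' (fun _ => 0) :=
      lemA y' j (by simp [hy'])
    exact step1.trans step2
  refine ⟨fun _ => 0, mem0, ?_⟩
  rintro y ⟨i, hy0 | hy1⟩
  · exact (lemA y i hy0).symm
  · exact (lemB y i hy1).symm
end CoveringLifting

/-- If `p : X̃ → X` is a covering projection of path-connected spaces, then for all
`n ≥ 2` (written `n = m + 2`) the induced map `p_* : πₙ^{qtop}(X̃) → πₙ^{qtop}(X)`
(given on representatives by post-composition with `p`) is an isomorphism of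
quasitopological groups: a group isomorphism which is a homeomorphism. -/
theorem stmt17 (E X : Type) [TopologicalSpace E] [TopologicalSpace X]
    [PathConnectedSpace E] [PathConnectedSpace X]
    (p : E → X) (hp : IsCoveringMap p) (e₀ : E) (m : ℕ) :
    ∃ P : HomotopyGroup (Fin (m + 2)) E e₀ ≃ HomotopyGroup (Fin (m + 2)) X (p e₀),
      (∀ (γ : GenLoop (Fin (m + 2)) E e₀) (δ : GenLoop (Fin (m + 2)) X (p e₀)),
        (∀ t, δ t = p (γ t)) → P ⟦γ⟧ = ⟦δ⟧) ∧
      (∀ a b, P (a * b) = P a * P b) ∧ IsHomeomorph P := by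
  classical
  have hsurj : Function.Surjective p := by
    have hcl : IsClopen (range p) := by
      refine ⟨?_, hp.isOpenMap.isOpen_range⟩
      rw [← isOpen_compl_iff, isOpen_iff_forall_mem_open]
      intro x hx
      obtain ⟨_, U, hxU, hU, hfU, H, hH⟩ := hp x
      refine ⟨U, ?_, hU, hxU⟩
      rintro y hy ⟨e, rfl⟩
      exact hx ⟨(H ⟨e, hy⟩).2.1, (H ⟨e, hy⟩).2.2⟩
    exact Set.range_eq_univ.1 (hcl.eq_univ ⟨p e₀, e₀, rfl⟩)
  let pc : C(E, X) := ⟨p, hp.continuous⟩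
  have zeroMem : (fun _ => (0:I) : Fin (m+2) → I) ∈ Cube.boundary (Fin (m+2)) :=
    ⟨0, Or.inl rfl⟩
  have bdPre : IsPreconnected (Cube.boundary (Fin (m+2))) :=
    (cubeBoundary_pathConnected m).isConnected.isPreconnected
  set A := ↥(GenLoop (Fin (m+2)) X (p e₀)) with hA
  let ev : C(A × (Fin (m+2) → I), X) := ⟨fun z => z.1 z.2, continuous_eval⟩
  obtain ⟨Λ, hΛp, hΛi⟩ := cubeLift hp hsurj (m+2) ev (ContinuousMap.const A e₀)
    (fun δ => (δ.2 _ zeroMem).symm)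
  have bd : ∀ δ : A, ∀ y ∈ Cube.boundary (Fin (m+2)), Λ.curry δ y = e₀ := by
    intro δ y hy
    have hcc : ∀ y₁ ∈ Cube.boundary (Fin (m+2)), ∀ y₂ ∈ Cube.boundary (Fin (m+2)),
        p (Λ (δ, y₁)) = p (Λ (δ, y₂)) := by
      intro y₁ h₁ y₂ h₂
      rw [hΛp (δ, y₁), hΛp (δ, y₂)]
      show δ.1 y₁ = δ.1 y₂
      rw [δ.2 _ h₁, δ.2 _ h₂]
    have h := hp.constOn_of_comp bdPre
      ((Λ.curry δ).continuous.continuousOn) hcc hy zeroMem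
    show Λ (δ, y) = e₀
    calc Λ (δ, y) = Λ (δ, fun _ => 0) := h
      _ = e₀ := hΛi δ
  let ΨG : A → ↥(GenLoop (Fin (m+2)) E e₀) := fun δ => ⟨Λ.curry δ, bd δ⟩
  let ΦG : ↥(GenLoop (Fin (m+2)) E e₀) → A := fun γ =>
    ⟨pc.comp γ.1, fun y hy => by show p (γ.1 y) = p e₀; rw [γ.2 y hy]⟩
  have hΦΨ : ∀ δ, ΦG (ΨG δ) = δ := fun δ =>
    Subtype.ext (ContinuousMap.ext fun y => hΛp (δ, y))
  have hΨΦ : ∀ γ, ΨG (ΦG γ) = γ := by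
    intro γ
    apply Subtype.ext; apply ContinuousMap.ext; intro y
    refine liftUnique hp (Λ.curry (ΦG γ)).continuous γ.1.continuous (fun y' => ?_)
      (z₀ := fun _ => 0) ?_ y
    · rw [show Λ.curry (ΦG γ) y' = Λ ((ΦG γ), y') from rfl, hΛp ((ΦG γ), y')]
      rfl
    · rw [show Λ.curry (ΦG γ) (fun _ => 0) = Λ ((ΦG γ), fun _ => 0) from rfl, hΛi (ΦG γ),
        γ.2 _ zeroMem]
      rfl
  have fwd : ∀ γ₁ γ₂, GenLoop.Homotopic γ₁ γ₂ → GenLoop.Homotopic (ΦG γ₁) (ΦG γ₂) :=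
    fun γ₁ γ₂ h => h.map (fun K => K.compContinuousMap pc)
  have bwd : ∀ γ₁ γ₂ : ↥(GenLoop (Fin (m+2)) E e₀),
      GenLoop.Homotopic (ΦG γ₁) (ΦG γ₂) → GenLoop.Homotopic γ₁ γ₂ := by
    rintro γ₁ γ₂ ⟨K⟩
    let H' : C((Fin (m+2) → I) × I, X) :=
      K.toHomotopy.toContinuousMap.comp ⟨Prod.swap, continuous_swap⟩
    obtain ⟨Gl, hGlp, hGli⟩ := hLift hp hsurj H' γ₁.1
      (fun y => by show p (γ₁.1 y) = K (0, y); rw [K.apply_zero]; rfl)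
    have hstrip : ∀ y ∈ Cube.boundary (Fin (m+2)), ∀ t : I, Gl (y, t) = e₀ := by
      intro y hy t
      have hcc : ∀ z ∈ (Cube.boundary (Fin (m+2))) ×ˢ (univ : Set I),
          ∀ w ∈ (Cube.boundary (Fin (m+2))) ×ˢ (univ : Set I), p (Gl z) = p (Gl w) := by
        rintro z ⟨hz, -⟩ w ⟨hw, -⟩
        have e1 : ∀ v, v ∈ Cube.boundary (Fin (m+2)) → ∀ s : I, p (Gl (v, s)) = p e₀ := by
          intro v hv s
          rw [hGlp (v, s)]
          show K (s, v) = p e₀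
          rw [K.eq_fst s hv]
          show p (γ₁.1 v) = p e₀
          rw [γ₁.2 v hv]
        rw [e1 z.1 hz z.2, e1 w.1 hw w.2]
      have h := hp.constOn_of_comp (bdPre.prod isPreconnected_univ)
        (Gl.continuous.continuousOn) hcc
        (show (y, t) ∈ _ from ⟨hy, trivial⟩)
        (show ((fun _ => 0 : Fin (m+2) → I), (0:I)) ∈ _ from ⟨zeroMem, trivial⟩)
      rw [h, hGli]
      exact γ₁.2 _ zeroMem
    have htop : ∀ y, Gl (y, 1) = γ₂.1 y := by
      refine liftUnique hp (Gl.continuous.comp (continuous_id.prodMk continuous_const))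
        γ₂.1.continuous (fun y => ?_) (z₀ := fun _ => 0) ?_
      · rw [hGlp (y, 1)]
        show K (1, y) = p (γ₂.1 y)
        rw [K.apply_one]
        rfl
      · rw [hstrip _ zeroMem 1, γ₂.2 _ zeroMem]
    exact ⟨⟨⟨⟨fun z => Gl (z.2, z.1),
        Gl.continuous.comp (continuous_snd.prodMk continuous_fst)⟩,
        fun y => hGli y, fun y => htop y⟩,
        fun t y hy => (hstrip y hy t).trans (γ₁.2 y hy).symm⟩⟩
  have hΨrel : ∀ δ₁ δ₂ : A, GenLoop.Homotopic δ₁ δ₂ →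
      GenLoop.Homotopic (ΨG δ₁) (ΨG δ₂) := by
    intro δ₁ δ₂ h
    apply bwd
    rw [hΦΨ δ₁, hΦΨ δ₂]
    exact h
  let Pmap : HomotopyGroup (Fin (m+2)) E e₀ → HomotopyGroup (Fin (m+2)) X (p e₀) :=
    Quotient.map' ΦG fwd
  let Qmap : HomotopyGroup (Fin (m+2)) X (p e₀) → HomotopyGroup (Fin (m+2)) E e₀ :=
    Quotient.map' ΨG hΨrel
  have hQP : ∀ q, Qmap (Pmap q) = q := by
    rintro ⟨γ⟩
    show Quotient.mk _ (ΨG (ΦG γ)) = Quotient.mk _ γ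
    rw [hΨΦ γ]
  have hPQ : ∀ q, Pmap (Qmap q) = q := by
    rintro ⟨δ⟩
    show Quotient.mk _ (ΦG (ΨG δ)) = Quotient.mk _ δ
    rw [hΦΨ δ]
  let P : HomotopyGroup (Fin (m+2)) E e₀ ≃ HomotopyGroup (Fin (m+2)) X (p e₀) :=
    ⟨Pmap, Qmap, hQP, hPQ⟩
  have hmk : ∀ γ, P ⟦γ⟧ = ⟦ΦG γ⟧ := fun γ => rfl
  refine ⟨P, ?_, ?_, ?_⟩
  · intro γ δ hδ
    have hδ' : δ = ΦG γ := Subtype.ext (ContinuousMap.ext fun t => hδ t)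
    rw [hmk γ, hδ']
  · intro a b
    refine Quotient.inductionOn₂ a b ?_
    intro f g
    have h1 : ((· * ·) : _ → _ → HomotopyGroup (Fin (m+2)) E e₀) ⟦f⟧ ⟦g⟧
        = ⟦GenLoop.transAt 0 g f⟧ := HomotopyGroup.mul_spec
    have h2 : ((· * ·) : _ → _ → HomotopyGroup (Fin (m+2)) X (p e₀)) ⟦ΦG f⟧ ⟦ΦG g⟧
        = ⟦GenLoop.transAt 0 (ΦG g) (ΦG f)⟧ := HomotopyGroup.mul_spec
    have key : ΦG (GenLoop.transAt 0 g f) = GenLoop.transAt 0 (ΦG g) (ΦG f) := by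
      refine Subtype.ext (ContinuousMap.ext fun t => ?_)
      show p (if ((t 0 : ℝ)) ≤ 1 / 2
          then g (Function.update t 0 (Set.projIcc 0 1 zero_le_one (2 * (t 0 : ℝ))))
          else f (Function.update t 0 (Set.projIcc 0 1 zero_le_one (2 * (t 0 : ℝ) - 1)))) =
        (if ((t 0 : ℝ)) ≤ 1 / 2
          then p (g (Function.update t 0 (Set.projIcc 0 1 zero_le_one (2 * (t 0 : ℝ)))))
          else p (f (Function.update t 0 (Set.projIcc 0 1 zero_le_one (2 * (t 0 : ℝ) - 1)))))
      exact apply_ite p _ _ _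
    beta_reduce at h1 h2
    rw [h1, hmk, key, hmk f, hmk g, h2]
  · have contP : Continuous Pmap := by
      refine Continuous.quotient_map' ?_ _
      exact Continuous.subtype_mk
        ((ContinuousMap.continuous_postcomp pc).comp continuous_subtype_val) _
    have contQ : Continuous Qmap := by
      refine Continuous.quotient_map' ?_ _
      exact (Λ.curry.continuous).subtype_mk _
    exact Homeomorph.isHomeomorph ⟨P, contP, contQ⟩
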